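/- Let d ≥ 1 and let X_q, X_p : ℝ^d × ℝ^d → ℝ^d be continuously differentiable. Then the pair X = (X_q, X_p) is Hamiltonian (i.e., there exists a twice continuously differentiable H : ℝ^d × ℝ^d → ℝ with X_q(x,y) = ∂H/∂y(x,y) and X_p(x,y) = −∂H/∂x(x,y) for all (x,y) ∈ ℝ^d × ℝ^d) if and only if X satisfies the Hamiltonian Helmholtz conditions at every point (x,y) ∈ ℝ^d × ℝ^d: ∂X_q/∂x(x,y) + (∂X_p/∂y(x,y))ᵀ = 0, and the d × d matrices ∂X_q/∂y(x,y) and ∂X_p/∂x(x,y) are symmetric. -/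

import Mathlib

open scoped RealInnerProductSpace

/-- The Jacobian block of the total derivative of `F` at `z` corresponding to the
first factor (`∂F/∂x(z)`), as a continuous linear map. -/
noncomputable def pderivFst {d m : ℕ}
    (F : EuclideanSpace ℝ (Fin d) × EuclideanSpace ℝ (Fin d) → EuclideanSpace ℝ (Fin m))
    (z : EuclideanSpace ℝ (Fin d) × EuclideanSpace ℝ (Fin d)) :
    EuclideanSpace ℝ (Fin d) →L[ℝ] EuclideanSpace ℝ (Fin m) :=
  (fderiv ℝ F z).comp (ContinuousLinearMap.inl ℝ _ _)

/-- The Jacobian block of the total derivative of `F` at `z` corresponding to the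
second factor (`∂F/∂y(z)`), as a continuous linear map. -/
noncomputable def pderivSnd {d m : ℕ}
    (F : EuclideanSpace ℝ (Fin d) × EuclideanSpace ℝ (Fin d) → EuclideanSpace ℝ (Fin m))
    (z : EuclideanSpace ℝ (Fin d) × EuclideanSpace ℝ (Fin d)) :
    EuclideanSpace ℝ (Fin d) →L[ℝ] EuclideanSpace ℝ (Fin m) :=
  (fderiv ℝ F z).comp (ContinuousLinearMap.inr ℝ _ _)

/-- The Hamiltonian Helmholtz conditions for the pair `X = (Xq, Xp)`:
`∂Xq/∂x + (∂Xp/∂y)ᵀ = 0`, and `∂Xq/∂y`, `∂Xp/∂x` are symmetric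
(transposition being the adjoint with respect to the Euclidean inner product). -/
def HelmholtzConditions {d : ℕ}
    (Xq Xp : EuclideanSpace ℝ (Fin d) × EuclideanSpace ℝ (Fin d) → EuclideanSpace ℝ (Fin d)) :
    Prop :=
  ∀ z : EuclideanSpace ℝ (Fin d) × EuclideanSpace ℝ (Fin d),
    pderivFst Xq z + ContinuousLinearMap.adjoint (pderivSnd Xp z) = 0 ∧
    ContinuousLinearMap.adjoint (pderivSnd Xq z) = pderivSnd Xq z ∧
    ContinuousLinearMap.adjoint (pderivFst Xp z) = pderivFst Xp z

/-- `X = (Xq, Xp)` is a Hamiltonian vector field: there is a twice continuously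
differentiable `H` with `Xq = ∂H/∂y` and `Xp = −∂H/∂x` (partial gradients). -/
def IsHamiltonianPair {d : ℕ}
    (Xq Xp : EuclideanSpace ℝ (Fin d) × EuclideanSpace ℝ (Fin d) → EuclideanSpace ℝ (Fin d)) :
    Prop :=
  ∃ H : EuclideanSpace ℝ (Fin d) × EuclideanSpace ℝ (Fin d) → ℝ,
    ContDiff ℝ 2 H ∧
    ∀ z : EuclideanSpace ℝ (Fin d) × EuclideanSpace ℝ (Fin d),
      HasGradientAt (fun y => H (z.1, y)) (Xq z) z.2 ∧
      HasGradientAt (fun x => H (x, z.2)) (-(Xp z)) z.1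

open MeasureTheory ContinuousLinearMap

section Poincare
variable {Z : Type*} [NormedAddCommGroup Z] [NormedSpace ℝ Z] [FiniteDimensional ℝ Z]

/-- Poincaré lemma for `1`-forms on a finite-dimensional real vector space:
a closed `C¹` one-form is the differential of the explicit radial primitive. -/
theorem poincare_hasFDerivAt (ω : Z → Z →L[ℝ] ℝ) (hω : ContDiff ℝ 1 ω)
    (hsymm : ∀ w u v, fderiv ℝ ω w u v = fderiv ℝ ω w v u) (z : Z) :
    HasFDerivAt (fun x => ∫ t in (0:ℝ)..1, ω (t • x) x) (ω z) z := by
  have hdω : Differentiable ℝ ω := hω.differentiable one_ne_zero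
  have hcω : Continuous ω := hω.continuous
  have hcω' : Continuous (fderiv ℝ ω) := hω.continuous_fderiv one_ne_zero
  set G : Z → ℝ → Z →L[ℝ] ℝ := fun x t => ω (t • x) + t • (fderiv ℝ ω (t • x) x) with hGdef
  -- Step A: derivative in x
  have hG : ∀ (t : ℝ) (x : Z), HasFDerivAt (fun x => ω (t • x) x) (G x t) x := by
    intro t x
    have h1 : HasFDerivAt (fun x : Z => t • x) (t • ContinuousLinearMap.id ℝ Z) x :=
      (hasFDerivAt_id x).const_smul t
    have h2 : HasFDerivAt (fun x => ω (t • x))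
        ((fderiv ℝ ω (t • x)).comp (t • ContinuousLinearMap.id ℝ Z)) x :=
      (hdω (t • x)).hasFDerivAt.comp x h1
    have h3 := h2.clm_apply (hasFDerivAt_id x)
    have heq : (ω (t • x)).comp (ContinuousLinearMap.id ℝ Z) +
        ((fderiv ℝ ω (t • x)).comp (t • ContinuousLinearMap.id ℝ Z)).flip x = G x t := by
      ext h
      simp [hGdef, hsymm (t • x) h x, mul_comm]
    simp only [id_eq] at h3
    rwa [heq] at h3
  -- continuity of G jointly
  have c1 : Continuous fun p : ℝ × Z => p.1 • p.2 := continuous_fst.smul continuous_snd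
  have hGcont : Continuous fun p : ℝ × Z => G p.2 p.1 := by
    have c2 : Continuous fun p : ℝ × Z => fderiv ℝ ω (p.1 • p.2) p.2 :=
      isBoundedBilinearMap_apply.continuous.comp ((hcω'.comp c1).prodMk continuous_snd)
    exact (hcω.comp c1).add (continuous_fst.smul c2)
  have hGzcont : Continuous fun t : ℝ => G z t :=
    hGcont.comp (continuous_id.prodMk continuous_const)
  -- FTC
  have hFTC : (∫ t in (0:ℝ)..1, G z t) = ω z := by
    have key : ∀ t ∈ Set.uIcc (0:ℝ) 1, HasDerivAt (fun t : ℝ => t • ω (t • z)) (G z t) t := by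
      intro t _
      have h1 : HasDerivAt (fun t : ℝ => t • z) z t := by
        simpa using (hasDerivAt_id t).smul_const z
      have h2 : HasDerivAt (fun t : ℝ => ω (t • z)) (fderiv ℝ ω (t • z) z) t :=
        (hdω (t • z)).hasFDerivAt.comp_hasDerivAt t h1
      have h3 := (hasDerivAt_id t).fun_smul h2
      simpa [hGdef, add_comm] using h3
    have := intervalIntegral.integral_eq_sub_of_hasDerivAt key (hGzcont.intervalIntegrable 0 1)
    simpa using this
  -- boundedness
  obtain ⟨C, hC⟩ := ((isCompact_Icc (a := (0:ℝ)) (b := 1)).prod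
    (isCompact_closedBall z 1)).exists_bound_of_continuousOn hGcont.continuousOn
  have hFcont : ∀ x : Z, Continuous fun t : ℝ => ω (t • x) x := fun x =>
    isBoundedBilinearMap_apply.continuous.comp
      ((hcω.comp (continuous_id.smul continuous_const)).prodMk continuous_const)
  have main := intervalIntegral.hasFDerivAt_integral_of_dominated_of_fderiv_le
    (μ := volume) (F := fun x t => ω (t • x) x) (F' := G) (x₀ := z) (a := 0) (b := 1)
    (bound := fun _ => C) (s := Metric.ball z 1) (Metric.ball_mem_nhds z one_pos)
    (Filter.Eventually.of_forall fun x => (hFcont x).aestronglyMeasurable)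
    ((hFcont z).intervalIntegrable 0 1)
    (hGzcont.aestronglyMeasurable)
    (Filter.Eventually.of_forall fun t ht x hx => by
      refine hC (t, x) ?_
      refine ⟨?_, Metric.ball_subset_closedBall hx⟩
      have : t ∈ Set.Ioc (0:ℝ) 1 := by rwa [Set.uIoc_of_le zero_le_one] at ht
      exact Set.Ioc_subset_Icc_self this)
    (intervalIntegrable_const)
    (Filter.Eventually.of_forall fun t ht x hx => hG t x)
  rwa [hFTC] at main

end Poincare

section Ham
variable {d : ℕ}
local notation "E" => EuclideanSpace ℝ (Fin d)

/-- The real inner product as a continuous bilinear map. -/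
noncomputable def innerCLM : E →L[ℝ] E →L[ℝ] ℝ :=
  LinearMap.mkContinuous₂ (innerₗ (EuclideanSpace ℝ (Fin d))) 1 fun x y => by
    simpa using abs_real_inner_le_norm x y

@[simp] lemma innerCLM_apply (x y : E) : innerCLM x y = ⟪x, y⟫ := rfl

noncomputable def cmpFst : (E →L[ℝ] ℝ) →L[ℝ] ((E × E) →L[ℝ] ℝ) :=
  (ContinuousLinearMap.compL ℝ (E × E) E ℝ).flip (ContinuousLinearMap.fst ℝ E E)

noncomputable def cmpSnd : (E →L[ℝ] ℝ) →L[ℝ] ((E × E) →L[ℝ] ℝ) :=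
  (ContinuousLinearMap.compL ℝ (E × E) E ℝ).flip (ContinuousLinearMap.snd ℝ E E)

@[simp] lemma cmpFst_apply (L : E →L[ℝ] ℝ) (u : E × E) : cmpFst L u = L u.1 := rfl
@[simp] lemma cmpSnd_apply (L : E →L[ℝ] ℝ) (u : E × E) : cmpSnd L u = L u.2 := rfl

/-- The 1-form associated to the pair `(Xq, Xp)`. -/
noncomputable def omg (Xq Xp : E × E → E) (w : E × E) : (E × E) →L[ℝ] ℝ :=
  (cmpSnd.comp innerCLM) (Xq w) - (cmpFst.comp innerCLM) (Xp w)

@[simp] lemma omg_apply (Xq Xp : E × E → E) (w u : E × E) :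
    omg Xq Xp w u = ⟪Xq w, u.2⟫ - ⟪Xp w, u.1⟫ := rfl

lemma omg_contDiff {Xq Xp : E × E → E} (hXq : ContDiff ℝ 1 Xq)
    (hXp : ContDiff ℝ 1 Xp) : ContDiff ℝ 1 (omg Xq Xp) := by
  exact (((cmpSnd.comp innerCLM).contDiff).comp hXq).sub
    (((cmpFst.comp innerCLM).contDiff).comp hXp)

lemma omg_hasFDerivAt {Xq Xp : E × E → E} (hXq : ContDiff ℝ 1 Xq)
    (hXp : ContDiff ℝ 1 Xp) (w : E × E) :
    HasFDerivAt (omg Xq Xp)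
      ((cmpSnd.comp innerCLM).comp (fderiv ℝ Xq w) -
       (cmpFst.comp innerCLM).comp (fderiv ℝ Xp w)) w := by
  exact (((cmpSnd.comp innerCLM).hasFDerivAt.comp w
      (hXq.differentiable one_ne_zero w).hasFDerivAt)).sub
    (((cmpFst.comp innerCLM).hasFDerivAt.comp w
      (hXp.differentiable one_ne_zero w).hasFDerivAt))

lemma omg_fderiv_apply {Xq Xp : E × E → E} (hXq : ContDiff ℝ 1 Xq)
    (hXp : ContDiff ℝ 1 Xp) (w u v : E × E) :
    fderiv ℝ (omg Xq Xp) w u v = ⟪fderiv ℝ Xq w u, v.2⟫ - ⟪fderiv ℝ Xp w u, v.1⟫ := by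
  rw [(omg_hasFDerivAt hXq hXp w).fderiv]
  simp

lemma fderiv_eq_pderiv (F : E × E → E) (z u : E × E) :
    fderiv ℝ F z u = pderivFst F z u.1 + pderivSnd F z u.2 := by
  have h : ((u.1, 0) : E × E) + (0, u.2) = u := by simp
  simp only [pderivFst, pderivSnd, ContinuousLinearMap.comp_apply, inl_apply, inr_apply]
  rw [← map_add, h]

lemma pderivFst_apply' (F : E × E → E) (z : E × E) (a : E) :
    pderivFst F z a = fderiv ℝ F z (a, 0) := rfl

lemma pderivSnd_apply' (F : E × E → E) (z : E × E) (a : E) :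
    pderivSnd F z a = fderiv ℝ F z (0, a) := rfl

end Ham

theorem hamiltonian_iff_helmholtz {d : ℕ} (hd : 1 ≤ d)
    (Xq Xp : EuclideanSpace ℝ (Fin d) × EuclideanSpace ℝ (Fin d) → EuclideanSpace ℝ (Fin d))
    (hXq : ContDiff ℝ 1 Xq) (hXp : ContDiff ℝ 1 Xp) :
    IsHamiltonianPair Xq Xp ↔ HelmholtzConditions Xq Xp := by
  constructor
  · rintro ⟨H, hH2, hgrad⟩ z
    have hdH : Differentiable ℝ H := hH2.differentiable two_ne_zero
    have hsnd : ∀ (w : EuclideanSpace ℝ (Fin d) × EuclideanSpace ℝ (Fin d))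
        (v : EuclideanSpace ℝ (Fin d)), fderiv ℝ H w (0, v) = ⟪Xq w, v⟫ := by
      intro w v
      have h1 : HasFDerivAt (fun y => H (w.1, y))
          ((fderiv ℝ H w).comp
            ((0 : EuclideanSpace ℝ (Fin d) →L[ℝ] EuclideanSpace ℝ (Fin d)).prod
              (ContinuousLinearMap.id ℝ _))) w.2 :=
        (hdH w).hasFDerivAt.comp w.2 (HasFDerivAt.prodMk (hasFDerivAt_const w.1 w.2) (hasFDerivAt_id w.2))
      have h2 := hasGradientAt_iff_hasFDerivAt.mp (hgrad w).1
      have heq := h1.unique h2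
      calc fderiv ℝ H w (0, v)
          = ((fderiv ℝ H w).comp
            ((0 : EuclideanSpace ℝ (Fin d) →L[ℝ] EuclideanSpace ℝ (Fin d)).prod
              (ContinuousLinearMap.id ℝ _))) v := by simp
        _ = ⟪Xq w, v⟫ := by rw [heq]; exact InnerProductSpace.toDual_apply_apply
    have hfst : ∀ (w : EuclideanSpace ℝ (Fin d) × EuclideanSpace ℝ (Fin d))
        (v : EuclideanSpace ℝ (Fin d)), fderiv ℝ H w (v, 0) = -⟪Xp w, v⟫ := by
      intro w v
      have h1 : HasFDerivAt (fun x => H (x, w.2))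
          ((fderiv ℝ H w).comp ((ContinuousLinearMap.id ℝ _).prod
            (0 : EuclideanSpace ℝ (Fin d) →L[ℝ] EuclideanSpace ℝ (Fin d)))) w.1 :=
        (hdH w).hasFDerivAt.comp w.1 (HasFDerivAt.prodMk (hasFDerivAt_id w.1) (hasFDerivAt_const w.2 w.1))
      have h2 := hasGradientAt_iff_hasFDerivAt.mp (hgrad w).2
      have heq := h1.unique h2
      calc fderiv ℝ H w (v, 0)
          = ((fderiv ℝ H w).comp ((ContinuousLinearMap.id ℝ _).prod
            (0 : EuclideanSpace ℝ (Fin d) →L[ℝ] EuclideanSpace ℝ (Fin d)))) v := by simp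
        _ = ⟪-(Xp w), v⟫ := by rw [heq]; exact InnerProductSpace.toDual_apply_apply
        _ = -⟪Xp w, v⟫ := by rw [inner_neg_left]
    have hfd : fderiv ℝ H = omg Xq Xp := by
      funext w
      apply ContinuousLinearMap.ext
      intro u
      have hu : ((u.1, 0) : EuclideanSpace ℝ (Fin d) × EuclideanSpace ℝ (Fin d))
          + (0, u.2) = u := by simp
      conv_lhs => rw [← hu]
      rw [map_add, hsnd, hfst]
      simp only [omg_apply]
      ring
    have hB := (hH2.contDiffAt (x := z)).isSymmSndFDerivAt (by simp [minSmoothness_of_isRCLikeNormedField])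
    have hderiv2 : ∀ u v : EuclideanSpace ℝ (Fin d) × EuclideanSpace ℝ (Fin d),
        ⟪fderiv ℝ Xq z u, v.2⟫ - ⟪fderiv ℝ Xp z u, v.1⟫ = fderiv ℝ (fderiv ℝ H) z u v := by
      intro u v
      rw [hfd]
      exact (omg_fderiv_apply hXq hXp z u v).symm
    have hQ : ∀ (u : EuclideanSpace ℝ (Fin d) × EuclideanSpace ℝ (Fin d))
        (v : EuclideanSpace ℝ (Fin d)),
        ⟪fderiv ℝ Xq z u, v⟫ = fderiv ℝ (fderiv ℝ H) z u (0, v) := by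
      intro u v
      have := hderiv2 u (0, v)
      simpa using this
    have hP : ∀ (u : EuclideanSpace ℝ (Fin d) × EuclideanSpace ℝ (Fin d))
        (v : EuclideanSpace ℝ (Fin d)),
        ⟪fderiv ℝ Xp z u, v⟫ = -(fderiv ℝ (fderiv ℝ H) z u (v, 0)) := by
      intro u v
      have := hderiv2 u (v, 0)
      simp only [inner_zero_right] at this
      linarith
    refine ⟨?_, ?_, ?_⟩
    · apply ContinuousLinearMap.ext
      intro a
      refine ext_inner_right ℝ fun v => ?_
      rw [ContinuousLinearMap.add_apply, ContinuousLinearMap.zero_apply, inner_add_left,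
        ContinuousLinearMap.adjoint_inner_left]
      have t1 : ⟪a, pderivSnd Xp z v⟫ = ⟪pderivSnd Xp z v, a⟫ := real_inner_comm _ _
      rw [t1, pderivFst_apply', pderivSnd_apply', hQ, hP, hB.eq (0, v) (a, 0)]
      simp
    · apply ContinuousLinearMap.ext
      intro a
      refine ext_inner_right ℝ fun v => ?_
      rw [ContinuousLinearMap.adjoint_inner_left]
      have t1 : ⟪a, pderivSnd Xq z v⟫ = ⟪pderivSnd Xq z v, a⟫ := real_inner_comm _ _
      rw [t1, pderivSnd_apply', pderivSnd_apply', hQ, hQ, hB.eq (0, v) (0, a)]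
    · apply ContinuousLinearMap.ext
      intro a
      refine ext_inner_right ℝ fun v => ?_
      rw [ContinuousLinearMap.adjoint_inner_left]
      have t1 : ⟪a, pderivFst Xp z v⟫ = ⟪pderivFst Xp z v, a⟫ := real_inner_comm _ _
      rw [t1, pderivFst_apply', pderivFst_apply', hP, hP, hB.eq (v, 0) (a, 0)]
  · intro hel
    have hω := omg_contDiff hXq hXp
    have hsym : ∀ w u v, fderiv ℝ (omg Xq Xp) w u v = fderiv ℝ (omg Xq Xp) w v u := by
      intro w u v
      obtain ⟨h1, h2, h3⟩ := hel w
      have eqa : ∀ a b : EuclideanSpace ℝ (Fin d),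
          ⟪pderivFst Xq w a, b⟫ = -⟪pderivSnd Xp w b, a⟫ := by
        intro a b
        have h1a : pderivFst Xq w a = -(ContinuousLinearMap.adjoint (pderivSnd Xp w) a) := by
          have := ContinuousLinearMap.ext_iff.mp h1 a
          rw [ContinuousLinearMap.add_apply, ContinuousLinearMap.zero_apply,
            add_eq_zero_iff_eq_neg] at this
          exact this
        rw [h1a, inner_neg_left, ContinuousLinearMap.adjoint_inner_left, real_inner_comm]
      have eqb : ∀ a b : EuclideanSpace ℝ (Fin d),
          ⟪pderivSnd Xq w a, b⟫ = ⟪pderivSnd Xq w b, a⟫ := by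
        intro a b
        calc ⟪pderivSnd Xq w a, b⟫
            = ⟪ContinuousLinearMap.adjoint (pderivSnd Xq w) a, b⟫ := by rw [h2]
          _ = ⟪a, pderivSnd Xq w b⟫ := ContinuousLinearMap.adjoint_inner_left _ _ _
          _ = ⟪pderivSnd Xq w b, a⟫ := real_inner_comm _ _
      have eqc : ∀ a b : EuclideanSpace ℝ (Fin d),
          ⟪pderivFst Xp w a, b⟫ = ⟪pderivFst Xp w b, a⟫ := by
        intro a b
        calc ⟪pderivFst Xp w a, b⟫
            = ⟪ContinuousLinearMap.adjoint (pderivFst Xp w) a, b⟫ := by rw [h3]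
          _ = ⟪a, pderivFst Xp w b⟫ := ContinuousLinearMap.adjoint_inner_left _ _ _
          _ = ⟪pderivFst Xp w b, a⟫ := real_inner_comm _ _
      rw [omg_fderiv_apply hXq hXp, omg_fderiv_apply hXq hXp,
        fderiv_eq_pderiv Xq w u, fderiv_eq_pderiv Xp w u,
        fderiv_eq_pderiv Xq w v, fderiv_eq_pderiv Xp w v,
        inner_add_left, inner_add_left, inner_add_left, inner_add_left]
      have h₁ := eqa u.1 v.2
      have h₂ := eqa v.1 u.2
      have h₃ := eqb u.2 v.2
      have h₄ := eqc u.1 v.1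
      linarith
    have hH' : ∀ z : EuclideanSpace ℝ (Fin d) × EuclideanSpace ℝ (Fin d),
        HasFDerivAt (fun x => ∫ t in (0:ℝ)..1, omg Xq Xp (t • x) x) (omg Xq Xp z) z :=
      fun z => poincare_hasFDerivAt _ hω hsym z
    refine ⟨fun x => ∫ t in (0:ℝ)..1, omg Xq Xp (t • x) x, ?_, ?_⟩
    · rw [show (2 : WithTop ℕ∞) = 1 + 1 from rfl, contDiff_succ_iff_fderiv]
      refine ⟨fun z => (hH' z).differentiableAt, ?_, ?_⟩
      · intro h
        exact absurd h (by simp)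
      · have : (fderiv ℝ fun x => ∫ t in (0:ℝ)..1, omg Xq Xp (t • x) x) = omg Xq Xp :=
          funext fun z => (hH' z).fderiv
        rw [this]
        exact hω
    · intro z
      constructor
      · rw [hasGradientAt_iff_hasFDerivAt]
        have h1 := (hH' z).comp (f := fun y => (z.1, y)) z.2 (HasFDerivAt.prodMk (hasFDerivAt_const z.1 z.2) (hasFDerivAt_id z.2))
        have heq : (InnerProductSpace.toDual ℝ (EuclideanSpace ℝ (Fin d))) (Xq z) =
            (omg Xq Xp z).comp
              ((0 : EuclideanSpace ℝ (Fin d) →L[ℝ] EuclideanSpace ℝ (Fin d)).prod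
                (ContinuousLinearMap.id ℝ _)) := by
          ext v
          simp [InnerProductSpace.toDual_apply_apply]
        rw [heq]
        exact h1
      · rw [hasGradientAt_iff_hasFDerivAt]
        have h1 := (hH' z).comp (f := fun x => (x, z.2)) z.1 (HasFDerivAt.prodMk (hasFDerivAt_id z.1) (hasFDerivAt_const z.2 z.1))
        have heq : (InnerProductSpace.toDual ℝ (EuclideanSpace ℝ (Fin d))) (-(Xp z)) =
            (omg Xq Xp z).comp ((ContinuousLinearMap.id ℝ _).prod
              (0 : EuclideanSpace ℝ (Fin d) →L[ℝ] EuclideanSpace ℝ (Fin d))) := by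
          ext v
          simp [InnerProductSpace.toDual_apply_apply, inner_neg_left]
        rw [heq]
        exact h1
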